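/- Decomposition theorem (Theorem 2.3, abstract form): The subspace Hor of horizontal vectors equals the orthogonal complement Tᗮ if and only if L leaves both T and Tᗮ invariant, i.e. Hor = Tᗮ ↔ ((∀ h ∈ T, L h ∈ T) ∧ (∀ h ∈ Tᗮ, L h ∈ Tᗮ)). -/
import Mathlib


open scoped RealInnerProductSpace

/-- **Decomposition theorem** (abstract form): the horizontal subspace
`Hor = {h : L h ∈ Tᗮ}` equals `Tᗮ` if and only if `L` leaves both `T` and `Tᗮ`
invariant. -/
theorem horizontality_eq_normality_iff
    {V : Type*} [NormedAddCommGroup V] [InnerProductSpace ℝ V]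
    (T : Submodule ℝ V) (hcompl : IsCompl T Tᗮ)
    (L : V →ₗ[ℝ] V)
    (hsym : ∀ h k : V, ⟪L h, k⟫ = ⟪h, L k⟫)
    (hpos : ∀ h : V, h ≠ 0 → 0 < ⟪L h, h⟫) :
    {h : V | L h ∈ Tᗮ} = (Tᗮ : Set V) ↔
      ((∀ h ∈ T, L h ∈ T) ∧ (∀ h ∈ Tᗮ, L h ∈ Tᗮ)) := by
  -- L is injective
  have hinj : ∀ x : V, L x = 0 → x = 0 := by
    intro x hx
    by_contra hne
    have := hpos x hne
    rw [hx, inner_zero_left] at this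
    exact lt_irrefl 0 this
  -- T = Tᗮᗮ (from IsCompl)
  have hTT : ∀ x : V, x ∈ Tᗮᗮ → x ∈ T := by
    intro x hx
    have hxsup : x ∈ T ⊔ Tᗮ := by
      rw [hcompl.sup_eq_top]; trivial
    obtain ⟨t, ht, n, hn, rfl⟩ := Submodule.mem_sup.mp hxsup
    have hn2 : n ∈ Tᗮᗮ := by
      have ht2 : t ∈ Tᗮᗮ := by
        rw [Submodule.mem_orthogonal]
        intro u hu
        rw [real_inner_comm]
        exact hu t ht
      have : (t + n) - t ∈ Tᗮᗮ := Submodule.sub_mem _ hx ht2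
      rwa [add_sub_cancel_left] at this
    have hn0 : n = 0 :=
      (Submodule.mem_bot ℝ).mp
        ((Submodule.orthogonal_disjoint Tᗮ).le_bot ⟨hn, hn2⟩)
    simpa [hn0] using ht
  constructor
  · intro heq
    have hmem : ∀ x : V, L x ∈ Tᗮ ↔ x ∈ Tᗮ := by
      intro x
      constructor
      · intro hx; have : x ∈ {h : V | L h ∈ Tᗮ} := hx
        rwa [heq] at this
      · intro hx; have : x ∈ {h : V | L h ∈ Tᗮ} := by rw [heq]; exact hx
        exact this
    refine ⟨?_, fun h hh => (hmem h).mpr hh⟩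
    intro h hh
    apply hTT
    rw [Submodule.mem_orthogonal]
    intro n hn
    have hLn : L n ∈ Tᗮ := (hmem n).mpr hn
    rw [real_inner_comm, hsym]
    exact hLn h hh
  · rintro ⟨hT, hN⟩
    ext x
    simp only [Set.mem_setOf_eq, SetLike.mem_coe]
    constructor
    · intro hx
      have hxsup : x ∈ T ⊔ Tᗮ := by rw [hcompl.sup_eq_top]; trivial
      obtain ⟨t, ht, n, hn, rfl⟩ := Submodule.mem_sup.mp hxsup
      have hLt1 : L t ∈ T := hT t ht
      have hLt2 : L t ∈ Tᗮ := by
        have : L t = L (t + n) - L n := by rw [map_add, add_sub_cancel_right]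
        rw [this]
        exact Submodule.sub_mem _ hx (hN n hn)
      have hLt0 : L t = 0 :=
        (Submodule.mem_bot ℝ).mp (hcompl.disjoint.le_bot ⟨hLt1, hLt2⟩)
      have ht0 : t = 0 := hinj t hLt0
      simpa [ht0] using hn
    · intro hx
      exact hN x hx
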